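/- Let u : ℝ → ℝ be C¹ and 1-periodic with mean μ₀ = ∫₀¹ u dx and μ₁² = ∫₀¹ (u')² dx. Then the sup norm of u over [0,1] is at most |μ₀| + (√3/6) μ₁. -/

import Mathlib

open intervalIntegral MeasureTheory

/-- Cauchy–Schwarz for interval integrals of continuous functions. -/
lemma cs_aux {f g : ℝ → ℝ} (hf : Continuous f) (hg : Continuous g) :
    (∫ y in (0:ℝ)..1, f y * g y) ^ 2 ≤
      (∫ y in (0:ℝ)..1, f y ^ 2) * (∫ y in (0:ℝ)..1, g y ^ 2) := by
  set A := ∫ y in (0:ℝ)..1, f y ^ 2 with hA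
  set B := ∫ y in (0:ℝ)..1, f y * g y with hB
  set C := ∫ y in (0:ℝ)..1, g y ^ 2 with hC
  have key : ∀ t : ℝ, 0 ≤ A * (t * t) + (2 * B) * t + C := by
    intro t
    have h1 : (0:ℝ) ≤ ∫ y in (0:ℝ)..1, (t * f y + g y) ^ 2 := by
      apply intervalIntegral.integral_nonneg (by norm_num)
      intro y _; positivity
    have h2 : (∫ y in (0:ℝ)..1, (t * f y + g y) ^ 2) =
        A * (t * t) + (2 * B) * t + C := by
      have e : ∀ y : ℝ, (t * f y + g y) ^ 2 =
          (t * t) * f y ^ 2 + (2 * t) * (f y * g y) + g y ^ 2 := by intro y; ring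
      simp_rw [e]
      rw [intervalIntegral.integral_add, intervalIntegral.integral_add,
        intervalIntegral.integral_const_mul, intervalIntegral.integral_const_mul]
      · ring
      · exact (continuous_const.mul (hf.pow 2)).intervalIntegrable 0 1
      · exact (continuous_const.mul (hf.mul hg)).intervalIntegrable 0 1
      · exact ((continuous_const.mul (hf.pow 2)).add (continuous_const.mul (hf.mul hg))).intervalIntegrable 0 1
      · exact (hg.pow 2).intervalIntegrable 0 1
    linarith [h1, h2.symm ▸ h1, h2 ▸ h1]
  have hd := discrim_le_zero key
  rw [discrim] at hd
  nlinarith [hd]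

theorem sup_norm_le_mean_add_deriv
    (u : ℝ → ℝ) (hu : ContDiff ℝ 1 u) (hper : Function.Periodic u 1)
    (μ₀ μ₁ : ℝ) (hμ₀ : μ₀ = ∫ x in (0:ℝ)..1, u x)
    (hμ₁ : μ₁ = Real.sqrt (∫ x in (0:ℝ)..1, (deriv u x) ^ 2)) :
    ∀ x ∈ Set.Icc (0:ℝ) 1, |u x| ≤ |μ₀| + (Real.sqrt 3 / 6) * μ₁ := by
  intro x _
  have hucont : Continuous u := hu.continuous
  have hd : ∀ t : ℝ, HasDerivAt u (deriv u t) t :=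
    fun t => (hu.differentiable one_ne_zero t).hasDerivAt
  have hdc : Continuous (deriv u) := hu.continuous_deriv le_rfl
  -- deriv u is periodic
  have hdper : Function.Periodic (deriv u) 1 := by
    intro t
    have h1 : HasDerivAt (fun s => u (s + 1)) (deriv u (t + 1)) t := by
      simpa [Function.comp_def] using (hd (t + 1)).comp t ((hasDerivAt_id t).add_const 1)
    have h2 : (fun s => u (s + 1)) = u := funext fun s => hper s
    rw [h2] at h1
    exact h1.unique (hd t)
  -- shifted integrals
  have hshift : (∫ y in (0:ℝ)..1, u (x + y)) = μ₀ := by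
    rw [intervalIntegral.integral_comp_add_left u x, hμ₀]
    simpa using hper.intervalIntegral_add_eq x 0
  have hshift' : (∫ y in (0:ℝ)..1, (deriv u (x + y)) ^ 2) =
      ∫ y in (0:ℝ)..1, (deriv u y) ^ 2 := by
    have : Function.Periodic (fun t => (deriv u t) ^ 2) 1 := fun t => by
      simp [hdper t]
    rw [intervalIntegral.integral_comp_add_left (fun t => (deriv u t) ^ 2) x]
    simpa using this.intervalIntegral_add_eq x 0
  -- integration by parts
  have ibp : (∫ y in (0:ℝ)..1, (y - 1/2) * deriv u (x + y)) = u x - μ₀ := by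
    have hv : ∀ y ∈ Set.uIcc (0:ℝ) 1,
        HasDerivAt (fun y => u (x + y)) (deriv u (x + y)) y := by
      intro y _
      simpa [Function.comp_def] using (hd (x + y)).comp y ((hasDerivAt_id y).const_add x)
    have hw : ∀ y ∈ Set.uIcc (0:ℝ) 1, HasDerivAt (fun y : ℝ => y - 1/2) 1 y :=
      fun y _ => (hasDerivAt_id y).sub_const _
    have := intervalIntegral.integral_mul_deriv_eq_deriv_mul hw hv
      (continuous_const.intervalIntegrable 0 1)
      ((hdc.comp (continuous_const.add continuous_id)).intervalIntegrable 0 1)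
    simp only [one_mul] at this
    rw [this, hshift]
    have : u (x + 1) = u x := hper x
    rw [this]; ring
  -- Cauchy-Schwarz
  have hcs := cs_aux (f := fun y => y - 1/2) (g := fun y => deriv u (x + y))
    (continuous_id.sub continuous_const) (hdc.comp (continuous_const.add continuous_id))
  have hker : (∫ y in (0:ℝ)..1, (y - 1/2) ^ 2) = 1 / 12 := by
    rw [show (∫ y in (0:ℝ)..1, (y - 1/2) ^ 2) =
        ∫ y in (0:ℝ)..1, (fun t : ℝ => t ^ 2) (y - 1/2) from rfl,
      intervalIntegral.integral_comp_sub_right (fun t : ℝ => t ^ 2) (1/2),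
      integral_pow]
    norm_num
  have hμ₁sq : μ₁ ^ 2 = ∫ y in (0:ℝ)..1, (deriv u y) ^ 2 := by
    rw [hμ₁, Real.sq_sqrt]
    apply intervalIntegral.integral_nonneg (by norm_num)
    intro y _; positivity
  have hbound : (u x - μ₀) ^ 2 ≤ (1 / 12) * μ₁ ^ 2 := by
    rw [hμ₁sq]
    calc (u x - μ₀) ^ 2 = (∫ y in (0:ℝ)..1, (y - 1/2) * deriv u (x + y)) ^ 2 := by
          rw [ibp]
      _ ≤ (∫ y in (0:ℝ)..1, (y - 1/2) ^ 2) *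
            (∫ y in (0:ℝ)..1, (deriv u (x + y)) ^ 2) := hcs
      _ = (1 / 12) * ∫ y in (0:ℝ)..1, (deriv u y) ^ 2 := by rw [hker, hshift']
  have hμ₁nn : 0 ≤ μ₁ := hμ₁ ▸ Real.sqrt_nonneg _
  have h3 : (Real.sqrt 3 / 6 * μ₁) ^ 2 = (1 / 12) * μ₁ ^ 2 := by
    have : Real.sqrt 3 ^ 2 = 3 := Real.sq_sqrt (by norm_num)
    nlinarith [this]
  have habs : |u x - μ₀| ≤ Real.sqrt 3 / 6 * μ₁ := by
    have h4 : (u x - μ₀) ^ 2 ≤ (Real.sqrt 3 / 6 * μ₁) ^ 2 := by rw [h3]; exact hbound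
    have h5 : 0 ≤ Real.sqrt 3 / 6 * μ₁ := by positivity
    calc |u x - μ₀| = Real.sqrt ((u x - μ₀) ^ 2) := (Real.sqrt_sq_eq_abs _).symm
      _ ≤ Real.sqrt ((Real.sqrt 3 / 6 * μ₁) ^ 2) := Real.sqrt_le_sqrt h4
      _ = Real.sqrt 3 / 6 * μ₁ := Real.sqrt_sq h5
  calc |u x| = |μ₀ + (u x - μ₀)| := by congr 1; ring
    _ ≤ |μ₀| + |u x - μ₀| := abs_add_le _ _
    _ ≤ |μ₀| + Real.sqrt 3 / 6 * μ₁ := by linarith
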